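/- For all i, j ∈ {1,2} with i ≠ j, every integer t ≥ k+1, and every natural number m with 0 ≤ m ≤ k, one has R^i_{−1,t} · x_{α_j}(−1)^m ∈ I_{kΛ₀} + U(𝔫̄)·x_{α₁+α₂}(−1). -/

import Mathlib

/- Setup: the nilpotent subalgebra 𝔫 ⊂ 𝔰𝔩(3,ℂ) spanned by E₁₂, E₂₃, E₁₃, its loop
algebra 𝔫̄ = 𝔫 ⊗ ℂ[t,t⁻¹], and the universal enveloping algebra U(𝔫̄). -/

noncomputable section
open scoped TensorProduct

namespace PrincipalSubspaceSL3

attribute [local instance 100] LieRing.ofAssociativeRing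

/-- 3×3 complex matrices. -/
abbrev gl3 : Type := Matrix (Fin 3) (Fin 3) ℂ

/-- The root vectors: `Egen 0 = x_{α₁} = E₁₂`, `Egen 1 = x_{α₂} = E₂₃`,
`Egen 2 = x_{α₁+α₂} = E₁₃`. -/
def Egen : Fin 3 → gl3
  | 0 => Matrix.single 0 1 1
  | 1 => Matrix.single 1 2 1
  | 2 => Matrix.single 0 2 1

lemma egen_lie_mem :
    ∀ x ∈ Submodule.span ℂ (Set.range Egen), ∀ y ∈ Submodule.span ℂ (Set.range Egen),
      ⁅x, y⁆ ∈ Submodule.span ℂ (Set.range Egen) := by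
  have key : ∀ a b : Fin 3, ⁅Egen a, Egen b⁆ ∈ Submodule.span ℂ (Set.range Egen) := by
    intro a b
    fin_cases a <;> fin_cases b <;>
      simp only [Egen, Ring.lie_def, Matrix.single_mul_single_same,
        Matrix.single_mul_single_of_ne, Fin.reduceEq, ne_eq, not_false_eq_true,
        one_mul, sub_zero, zero_sub, sub_self] <;>
      first
        | exact Submodule.zero_mem _
        | exact Submodule.subset_span ⟨2, rfl⟩
        | exact Submodule.neg_mem _ (Submodule.subset_span ⟨2, rfl⟩)
  intro x hx
  induction hx using Submodule.span_induction with
  | mem x hxs =>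
      obtain ⟨a, rfl⟩ := hxs
      intro y hy
      induction hy using Submodule.span_induction with
      | mem y hys => obtain ⟨b, rfl⟩ := hys; exact key a b
      | zero => simp
      | add y z hy hz hy' hz' => rw [lie_add]; exact Submodule.add_mem _ hy' hz'
      | smul c y hy hy' => rw [lie_smul]; exact Submodule.smul_mem _ _ hy'
  | zero => intro y hy; simp
  | add x z hx hz hx' hz' =>
      intro y hy; rw [add_lie]; exact Submodule.add_mem _ (hx' y hy) (hz' y hy)
  | smul c x hx hx' =>
      intro y hy; rw [smul_lie]; exact Submodule.smul_mem _ _ (hx' y hy)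

/-- The nilpotent Lie subalgebra 𝔫 = ℂE₁₂ ⊕ ℂE₂₃ ⊕ ℂE₁₃ of 𝔰𝔩(3,ℂ). -/
def nn : LieSubalgebra ℂ gl3 :=
  { Submodule.span ℂ (Set.range Egen) with
    lie_mem' := fun {x y} hx hy => egen_lie_mem x hx y hy }

/-- Laurent polynomials ℂ[t, t⁻¹]. -/
abbrev A : Type := LaurentPolynomial ℂ

/-- The loop algebra 𝔫̄ = 𝔫 ⊗ ℂ[t,t⁻¹]. -/
abbrev nbar : Type := A ⊗[ℂ] nn

set_option synthInstance.maxHeartbeats 1000000 in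
instance : LieAlgebra ℂ nbar where
  lie_smul c x y := by
    have h := lie_smul (algebraMap ℂ A c) x y
    rwa [algebraMap_smul, algebraMap_smul] at h

/-- The root vectors as elements of 𝔫. -/
def en (i : Fin 3) : nn := ⟨Egen i, Submodule.subset_span ⟨i, rfl⟩⟩

/-- `nx i m` is the element x_{α}(m) = x_α ⊗ tᵐ of 𝔫̄, where α is α₁, α₂, α₁+α₂
according to i = 0, 1, 2. -/
def nx (i : Fin 3) (m : ℤ) : nbar := LaurentPolynomial.T m ⊗ₜ[ℂ] en i

/-- The universal enveloping algebra U(𝔫̄). -/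
abbrev U : Type := UniversalEnvelopingAlgebra ℂ nbar

/-- `xg i m` is the element x_α(m) regarded inside U(𝔫̄). -/
def xg (i : Fin 3) (m : ℤ) : U := UniversalEnvelopingAlgebra.ι ℂ (nx i m)

/-- `Rtr k i t` = R^i_{-1,t} : the sum of x_{α_i}(m₁)⋯x_{α_i}(m_{k+1}) over all integer
tuples with every m_j ≤ -1 and m₁+⋯+m_{k+1} = -t (parametrized by m_j = -1 - n_j with
n : Fin (k+1) → ℕ, ∑ n = t - (k+1)).  Here i : Fin 2 refers to the simple root α_{i+1}. -/
def Rtr (k : ℕ) (i : Fin 2) (t : ℤ) : U :=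
  ∑ f ∈ Finset.Nat.antidiagonalTuple (k + 1) (t - (k + 1)).toNat,
    (List.ofFn fun j : Fin (k + 1) => xg i.castSucc (-1 - (f j : ℤ))).prod

/-- The left ideal J = Σ_{i,t≥k+1} U(𝔫̄)·R^i_{-1,t}. -/
def Jid (k : ℕ) : Submodule U U :=
  Submodule.span U {u : U | ∃ i : Fin 2, ∃ t : ℤ, (k : ℤ) + 1 ≤ t ∧ u = Rtr k i t}

/-- The left ideal U(𝔫̄)·𝔫̄₊, generated by the x_α(m) with m ≥ 0. -/
def nplusIdeal : Submodule U U :=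
  Submodule.span U {u : U | ∃ i : Fin 3, ∃ m : ℤ, 0 ≤ m ∧ u = xg i m}

/-- The left ideal I_{kΛ₀} = J + U(𝔫̄)·𝔫̄₊. -/
def IkL0 (k : ℕ) : Submodule U U := Jid k ⊔ nplusIdeal

/-- The left ideal I_{k₀Λ₀+k₁Λ₁+k₂Λ₂} = I_{kΛ₀} + U·x_{α₁}(-1)^{k₀+k₂+1}
+ U·x_{α₂}(-1)^{k₀+k₁+1} + U·x_{α₁+α₂}(-1)^{k₀+1} (with k = k₀+k₁+k₂). -/
def Iwt (k k0 k1 k2 : ℕ) : Submodule U U :=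
  IkL0 k ⊔ Submodule.span U {xg 0 (-1) ^ (k0 + k2 + 1)}
    ⊔ Submodule.span U {xg 1 (-1) ^ (k0 + k1 + 1)}
    ⊔ Submodule.span U {xg 2 (-1) ^ (k0 + 1)}

lemma lie_egen2 (x : gl3) (hx : x ∈ Submodule.span ℂ (Set.range Egen)) :
    ⁅Egen 2, x⁆ = 0 := by
  induction hx using Submodule.span_induction with
  | mem x hxs =>
      obtain ⟨b, rfl⟩ := hxs
      fin_cases b <;>
        simp [Egen, Ring.lie_def, Matrix.single_mul_single_same,
          Matrix.single_mul_single_of_ne]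
  | zero => simp
  | add y z hy hz hy' hz' => rw [lie_add, hy', hz', add_zero]
  | smul c y hy hy' => rw [lie_smul, hy', smul_zero]

lemma lie_en2 (v : nn) : ⁅en 2, v⁆ = 0 := by
  apply Subtype.ext
  rw [LieSubalgebra.coe_bracket]
  exact lie_egen2 v.1 v.2

lemma lie_en_01 : ⁅en 0, en 1⁆ = en 2 := by
  apply Subtype.ext
  rw [LieSubalgebra.coe_bracket]
  show ⁅Egen 0, Egen 1⁆ = Egen 2
  simp only [Egen, Ring.lie_def, Matrix.single_mul_single_same,
    Matrix.single_mul_single_of_ne, Fin.reduceEq, ne_eq, not_false_eq_true,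
    one_mul, sub_zero]

lemma lie_en_10 : ⁅en 1, en 0⁆ = -en 2 := by
  rw [← lie_skew, lie_en_01]

lemma lie_nx (a b : Fin 3) (m p : ℤ) :
    ⁅nx a m, nx b p⁆ = LaurentPolynomial.T (m + p) ⊗ₜ[ℂ] ⁅en a, en b⁆ := by
  rw [nx, nx, LaurentPolynomial.T_add]
  rfl

set_option synthInstance.maxHeartbeats 1000000
set_option maxHeartbeats 1000000

lemma xg_lie (a b : Fin 3) (m p : ℤ) :
    xg a m * xg b p - xg b p * xg a m
      = UniversalEnvelopingAlgebra.ι ℂ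
          ((LaurentPolynomial.T (m + p) ⊗ₜ[ℂ] ⁅en a, en b⁆ : nbar)) := by
  rw [← lie_nx, xg, xg, LieHom.map_lie, Ring.lie_def]

lemma xg2_eq (q : ℤ) :
    UniversalEnvelopingAlgebra.ι ℂ ((LaurentPolynomial.T q ⊗ₜ[ℂ] en 2 : nbar)) = xg 2 q := rfl

lemma xg_self_commute (a : Fin 3) (m p : ℤ) : Commute (xg a m) (xg a p) := by
  have h := xg_lie a a m p
  rw [lie_self, TensorProduct.tmul_zero, map_zero, sub_eq_zero] at h
  exact h

lemma xg_cross01 (m p : ℤ) : xg 0 m * xg 1 p = xg 1 p * xg 0 m + xg 2 (m + p) := by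
  have h := xg_lie 0 1 m p
  rw [lie_en_01, xg2_eq, sub_eq_iff_eq_add'] at h
  rw [h, add_comm]

lemma xg_cross10 (m p : ℤ) : xg 1 m * xg 0 p = xg 0 p * xg 1 m + (-1 : ℂ) • xg 2 (m + p) := by
  have h := xg_lie 1 0 m p
  rw [lie_en_10, TensorProduct.tmul_neg, map_neg, xg2_eq, sub_eq_iff_eq_add'] at h
  rw [h, neg_one_smul ℂ (xg 2 (m + p))]

lemma nx2_lie (m : ℤ) (w : nbar) : ⁅nx 2 m, w⁆ = 0 := by
  induction w using TensorProduct.induction_on with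
  | zero => exact lie_zero (M := nbar) (nx 2 m)
  | tmul a v =>
      show ⁅LaurentPolynomial.T m ⊗ₜ[ℂ] en 2, a ⊗ₜ[ℂ] v⁆ = (0 : nbar)
      rw [LieAlgebra.ExtendScalars.bracket_tmul, lie_en2, TensorProduct.tmul_zero]
  | add x y hx hy => exact (lie_add (nx 2 m) x y).trans (by rw [hx, hy, add_zero])

lemma xg2_commute_xi (m : ℤ) (v : nbar) :
    Commute (xg 2 m) (UniversalEnvelopingAlgebra.ι ℂ v) := by
  have h : UniversalEnvelopingAlgebra.ι ℂ ⁅nx 2 m, v⁆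
      = ⁅UniversalEnvelopingAlgebra.ι ℂ (nx 2 m), UniversalEnvelopingAlgebra.ι ℂ v⁆ :=
    LieHom.map_lie _ _ _
  rw [nx2_lie, map_zero, Ring.lie_def] at h
  have h2 := h.symm
  rw [sub_eq_zero] at h2
  exact h2

lemma xg2_central (m : ℤ) (u : U) : Commute (xg 2 m) u := by
  have hsurj : Function.Surjective (UniversalEnvelopingAlgebra.mkAlgHom ℂ nbar) :=
    RingCon.mkₐ_surjective _
  obtain ⟨x, rfl⟩ := hsurj u
  induction x using TensorAlgebra.induction with
  | algebraMap r =>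
      rw [AlgHom.commutes]
      exact (Algebra.commutes r (xg 2 m)).symm
  | ι v =>
      rw [← UniversalEnvelopingAlgebra.ι_apply]
      exact xg2_commute_xi m v
  | mul a b ha hb => rw [map_mul]; exact ha.mul_right hb
  | add a b ha hb => rw [map_add]; exact ha.add_right hb

/-! ### Sums of products of generators -/

/-- `Pp e p t` : sum of p-fold products of `xg e` at modes ≤ -1 with total mode -t. -/
def Pp (e : Fin 3) (p : ℕ) (t : ℤ) : U :=
  if (p : ℤ) ≤ t then
    ∑ f ∈ Finset.Nat.antidiagonalTuple p (t - p).toNat,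
      (List.ofFn fun l : Fin p => xg e (-1 - (f l : ℤ))).prod
  else 0

/-- `Dd e d p u` : sum of `xg 2 s * Pp e p t'` over s ≤ -(d+1), with total mode -u. -/
def Dd (e : Fin 3) (d : ℕ) (p : ℕ) (u : ℤ) : U :=
  if (p : ℤ) + (d + 1) ≤ u then
    ∑ ab ∈ Finset.HasAntidiagonal.antidiagonal (u - p - (d + 1)).toNat,
      xg 2 (-(d + 1) - (ab.1 : ℤ)) * Pp e p ((p : ℤ) + ab.2)
  else 0

lemma Pp_eq_zero {e : Fin 3} {p : ℕ} {t : ℤ} (h : t < (p : ℤ)) : Pp e p t = 0 :=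
  if_neg (not_le.mpr h)

lemma Dd_eq_zero {e : Fin 3} {d p : ℕ} {u : ℤ} (h : u < (p : ℤ) + (d + 1)) : Dd e d p u = 0 :=
  if_neg (not_le.mpr h)

lemma sum_adT_succ {M : Type*} [AddCommMonoid M] (p n : ℕ) (G : (Fin (p + 1) → ℕ) → M) :
    ∑ f ∈ Finset.Nat.antidiagonalTuple (p + 1) n, G f
      = ∑ ab ∈ Finset.HasAntidiagonal.antidiagonal n,
          ∑ g ∈ Finset.Nat.antidiagonalTuple p ab.2, G (Fin.cons ab.1 g) := by
  conv_rhs => rw [Finset.sum_sigma']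
  refine Finset.sum_nbij'
    (i := fun (f : Fin (p + 1) → ℕ) =>
      (⟨(f 0, ∑ l : Fin p, f (Fin.succ l)), Fin.tail f⟩ : (_ : ℕ × ℕ) × (Fin p → ℕ)))
    (j := fun x => Fin.cons x.1.1 x.2) ?_ ?_ ?_ ?_ ?_
  · intro f hf
    rw [Finset.Nat.mem_antidiagonalTuple] at hf
    rw [Finset.mem_sigma, Finset.HasAntidiagonal.mem_antidiagonal, Finset.Nat.mem_antidiagonalTuple]
    exact ⟨by rw [← hf, Fin.sum_univ_succ], rfl⟩
  · intro x hx
    rw [Finset.mem_sigma, Finset.HasAntidiagonal.mem_antidiagonal, Finset.Nat.mem_antidiagonalTuple] at hx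
    rw [Finset.Nat.mem_antidiagonalTuple, Fin.sum_univ_succ]
    simp only [Fin.cons_zero, Fin.cons_succ]
    rw [hx.2, hx.1]
  · intro f _
    exact Fin.cons_self_tail f
  · intro x hx
    rw [Finset.mem_sigma, Finset.HasAntidiagonal.mem_antidiagonal, Finset.Nat.mem_antidiagonalTuple] at hx
    obtain ⟨⟨a, b⟩, g⟩ := x
    simp only at hx
    refine Sigma.ext ?_ (heq_of_eq ?_)
    · simp only [Fin.cons_zero, Fin.cons_succ]
      rw [Prod.ext_iff]
      exact ⟨rfl, by simpa using hx.2⟩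
    · simpa using Fin.tail_cons a g
  · intro f _
    rw [Fin.cons_self_tail]

lemma antidiagonal_assoc {M : Type*} [AddCommMonoid M] (N : ℕ) (F : ℕ → ℕ → ℕ → M) :
    ∑ ab ∈ Finset.HasAntidiagonal.antidiagonal N, ∑ xy ∈ Finset.HasAntidiagonal.antidiagonal ab.2, F ab.1 xy.1 xy.2
      = ∑ ab ∈ Finset.HasAntidiagonal.antidiagonal N, ∑ xy ∈ Finset.HasAntidiagonal.antidiagonal ab.2, F xy.1 ab.1 xy.2 := by
  rw [Finset.sum_sigma', Finset.sum_sigma']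
  refine Finset.sum_nbij'
    (i := fun (x : (_ : ℕ × ℕ) × (ℕ × ℕ)) =>
      (⟨(x.2.1, x.1.1 + x.2.2), (x.1.1, x.2.2)⟩ : (_ : ℕ × ℕ) × (ℕ × ℕ)))
    (j := fun x => ⟨(x.2.1, x.1.1 + x.2.2), (x.1.1, x.2.2)⟩) ?_ ?_ ?_ ?_ ?_
  · intro x hx
    obtain ⟨⟨a, b⟩, ⟨c, d⟩⟩ := x
    rw [Finset.mem_sigma, Finset.HasAntidiagonal.mem_antidiagonal, Finset.HasAntidiagonal.mem_antidiagonal] at hx ⊢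
    dsimp only at hx ⊢
    omega
  · intro x hx
    obtain ⟨⟨a, b⟩, ⟨c, d⟩⟩ := x
    rw [Finset.mem_sigma, Finset.HasAntidiagonal.mem_antidiagonal, Finset.HasAntidiagonal.mem_antidiagonal] at hx ⊢
    dsimp only at hx ⊢
    omega
  · intro x hx
    rw [Finset.mem_sigma, Finset.HasAntidiagonal.mem_antidiagonal, Finset.HasAntidiagonal.mem_antidiagonal] at hx
    obtain ⟨⟨a, b⟩, ⟨c, d⟩⟩ := x
    simp only at hx
    refine Sigma.ext ?_ (heq_of_eq rfl)
    simp only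
    rw [Prod.ext_iff]
    exact ⟨rfl, by simpa using hx.2⟩
  · intro x hx
    rw [Finset.mem_sigma, Finset.HasAntidiagonal.mem_antidiagonal, Finset.HasAntidiagonal.mem_antidiagonal] at hx
    obtain ⟨⟨a, b⟩, ⟨c, d⟩⟩ := x
    simp only at hx
    refine Sigma.ext ?_ (heq_of_eq rfl)
    simp only
    rw [Prod.ext_iff]
    exact ⟨rfl, by simpa using hx.2⟩
  · intro x _
    rfl

lemma Pp_zero_eq (e : Fin 3) (t : ℤ) : Pp e 0 t = if t = 0 then 1 else 0 := by
  rw [Pp]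
  by_cases h0 : t = 0
  · subst h0
    rw [if_pos (by norm_num : ((0 : ℕ) : ℤ) ≤ 0), if_pos rfl]
    have h1 : ((0 : ℤ) - ((0 : ℕ) : ℤ)).toNat = 0 := by simp
    rw [h1, Finset.Nat.antidiagonalTuple_zero_zero, Finset.sum_singleton, List.ofFn_zero,
      List.prod_nil]
  · rw [if_neg h0]
    by_cases hn : (0 : ℤ) ≤ t
    · rw [if_pos (by exact_mod_cast hn)]
      obtain ⟨n, hn'⟩ : ∃ n, (t - (0 : ℕ)).toNat = n + 1 := ⟨(t - 0).toNat - 1, by omega⟩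
      rw [hn', Finset.Nat.antidiagonalTuple_zero_succ, Finset.sum_empty]
    · rw [if_neg (by exact_mod_cast hn)]

lemma Pp_zero_comm (e : Fin 3) (t : ℤ) (u : U) : Commute (Pp e 0 t) u := by
  rw [Pp_zero_eq]
  by_cases h : t = 0
  · rw [if_pos h]; exact Commute.one_left u
  · rw [if_neg h]; exact Commute.zero_left u

lemma Pp_succ (e : Fin 3) {p : ℕ} {t : ℤ} (h : (p : ℤ) + 1 ≤ t) :
    Pp e (p + 1) t = ∑ ab ∈ Finset.HasAntidiagonal.antidiagonal (t - (p + 1)).toNat,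
      xg e (-1 - (ab.1 : ℤ)) * Pp e p ((p : ℤ) + ab.2) := by
  rw [Pp, if_pos (by push_cast; omega), sum_adT_succ]
  have hN : (t - ((p + 1 : ℕ) : ℤ)).toNat = (t - ((p : ℤ) + 1)).toNat := by push_cast; ring_nf
  rw [hN]
  refine Finset.sum_congr rfl ?_
  intro ab hab
  rw [Finset.HasAntidiagonal.mem_antidiagonal] at hab
  rw [Pp, if_pos (by push_cast; omega)]
  have harg : ((p : ℤ) + (ab.2 : ℕ) - (p : ℕ)).toNat = ab.2 := by omega
  rw [harg, Finset.mul_sum]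
  refine Finset.sum_congr rfl ?_
  intro g _
  rw [List.ofFn_succ, List.prod_cons]
  simp only [Fin.cons_zero, Fin.cons_succ]

lemma Pp_eq_Rtr {k : ℕ} {i : Fin 2} {t : ℤ} (h : (k : ℤ) + 1 ≤ t) :
    Pp i.castSucc (k + 1) t = Rtr k i t := by
  rw [Pp, Rtr, if_pos (by push_cast; omega)]
  have hN : (t - ((k + 1 : ℕ) : ℤ)).toNat = (t - ((k : ℤ) + 1)).toNat := by push_cast; ring_nf
  rw [hN]

lemma Dd_split (e : Fin 3) (p : ℕ) (u : ℤ) :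
    Dd e 0 p u = xg 2 (-1) * Pp e p (u - 1) + Dd e 1 p u := by
  by_cases h1 : (p : ℤ) + 1 ≤ u
  · by_cases h2 : (p : ℤ) + 2 ≤ u
    · rw [Dd, Dd, if_pos (by push_cast; omega), if_pos (by push_cast; omega)]
      obtain ⟨n, hn⟩ : ∃ n, (u - p - ((0 : ℕ) + 1)).toNat = n + 1 ∧
          n = (u - p - ((1 : ℕ) + 1)).toNat := by
        refine ⟨(u - p - 2).toNat, ?_, ?_⟩ <;> push_cast <;> omega
      rw [hn.1, Finset.Nat.antidiagonal_succ, Finset.sum_cons, Finset.sum_map]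
      congr 1
      · rw [show (-(((0 : ℕ) : ℤ) + 1) - ((0 : ℕ) : ℤ)) = (-1 : ℤ) by norm_num,
          show ((p : ℤ) + ((n + 1 : ℕ) : ℤ)) = u - 1 by push_cast; omega]
      · rw [hn.2]
        refine Finset.sum_congr rfl fun ab _ => ?_
        simp only [Function.Embedding.coe_prodMap, Function.Embedding.coeFn_mk,
          Function.Embedding.refl_apply, Prod.map_fst, Prod.map_snd]
        rw [show (-(((0 : ℕ) : ℤ) + 1) - ((Nat.succ ab.1 : ℕ) : ℤ))
            = (-(((1 : ℕ) : ℤ) + 1) - ((ab.1 : ℕ) : ℤ)) by push_cast; ring]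
    · -- u = p + 1
      rw [Dd, if_pos (by push_cast; omega),
        show (u - p - ((0 : ℕ) + 1)).toNat = 0 by push_cast; omega,
        Finset.Nat.antidiagonal_zero, Finset.sum_singleton,
        Dd_eq_zero (by push_cast; omega), add_zero,
        show (-(((0 : ℕ) : ℤ) + 1) - ((0 : ℕ) : ℤ)) = (-1 : ℤ) by norm_num,
        show ((p : ℤ) + ((0 : ℕ) : ℤ)) = u - 1 by push_cast; omega]
  · rw [Dd_eq_zero (by push_cast; omega), Dd_eq_zero (by push_cast; omega),
      Pp_eq_zero (by omega), mul_zero, add_zero]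

lemma Dd_absorb (e : Fin 3) {d p : ℕ} {u : ℤ} (h : (p : ℤ) + 1 + ((d : ℤ) + 1) ≤ u) :
    ∑ ab ∈ Finset.HasAntidiagonal.antidiagonal (u - ((p : ℤ) + 1) - ((d : ℤ) + 1)).toNat,
      xg e (-1 - (ab.1 : ℤ)) * Dd e d p ((p : ℤ) + ((d : ℤ) + 1) + ab.2)
      = Dd e d (p + 1) u := by
  have hstep : ∀ ab : ℕ × ℕ,
      xg e (-1 - (ab.1 : ℤ)) * Dd e d p ((p : ℤ) + ((d : ℤ) + 1) + ab.2)
        = ∑ xy ∈ Finset.HasAntidiagonal.antidiagonal ab.2,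
            xg 2 (-((d : ℤ) + 1) - (xy.1 : ℤ))
              * (xg e (-1 - (ab.1 : ℤ)) * Pp e p ((p : ℤ) + xy.2)) := by
    intro ab
    rw [Dd, if_pos (by push_cast; omega),
      show ((p : ℤ) + ((d : ℤ) + 1) + ab.2 - p - (d + 1)).toNat = ab.2 by push_cast; omega,
      Finset.mul_sum]
    refine Finset.sum_congr rfl fun xy _ => ?_
    rw [← mul_assoc, ← mul_assoc, ((xg2_central (-((d : ℤ) + 1) - (xy.1 : ℤ))
      (xg e (-1 - (ab.1 : ℤ)))).eq)]
  calc
    ∑ ab ∈ Finset.HasAntidiagonal.antidiagonal (u - ((p : ℤ) + 1) - ((d : ℤ) + 1)).toNat,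
        xg e (-1 - (ab.1 : ℤ)) * Dd e d p ((p : ℤ) + ((d : ℤ) + 1) + ab.2)
      = ∑ ab ∈ Finset.HasAntidiagonal.antidiagonal (u - ((p : ℤ) + 1) - ((d : ℤ) + 1)).toNat,
          ∑ xy ∈ Finset.HasAntidiagonal.antidiagonal ab.2,
            xg 2 (-((d : ℤ) + 1) - (xy.1 : ℤ))
              * (xg e (-1 - (ab.1 : ℤ)) * Pp e p ((p : ℤ) + xy.2)) :=
      Finset.sum_congr rfl fun ab _ => hstep ab
    _ = ∑ ab ∈ Finset.HasAntidiagonal.antidiagonal (u - ((p : ℤ) + 1) - ((d : ℤ) + 1)).toNat,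
          ∑ xy ∈ Finset.HasAntidiagonal.antidiagonal ab.2,
            xg 2 (-((d : ℤ) + 1) - (ab.1 : ℤ))
              * (xg e (-1 - (xy.1 : ℤ)) * Pp e p ((p : ℤ) + xy.2)) :=
      antidiagonal_assoc _ (fun a x y =>
        xg 2 (-((d : ℤ) + 1) - (x : ℤ)) * (xg e (-1 - (a : ℤ)) * Pp e p ((p : ℤ) + y)))
    _ = Dd e d (p + 1) u := by
      rw [Dd, if_pos (by push_cast; omega)]
      rw [show (u - ((p + 1 : ℕ) : ℤ) - ((d : ℤ) + 1)).toNat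
          = (u - ((p : ℤ) + 1) - ((d : ℤ) + 1)).toNat by push_cast; ring_nf]
      refine Finset.sum_congr rfl fun ab hab => ?_
      rw [Finset.HasAntidiagonal.mem_antidiagonal] at hab
      rw [← Finset.mul_sum,
        show (((p + 1 : ℕ) : ℤ) + (ab.2 : ℤ)) = ((p : ℤ) + 1 + ab.2) by push_cast; ring,
        Pp_succ e (by push_cast; omega),
        show (((p : ℤ) + 1 + ab.2) - ((p : ℤ) + 1)).toNat = ab.2 by push_cast; omega]

lemma Kcomm (e j2 : Fin 3) (c : ℂ)
    (hC : ∀ a b : ℤ, xg e a * xg j2 b = xg j2 b * xg e a + c • xg 2 (a + b))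
    (d : ℕ) :
    ∀ (p : ℕ) (t : ℤ),
      Pp e p t * xg j2 (-(d : ℤ)) = xg j2 (-(d : ℤ)) * Pp e p t
        + ((p : ℂ) * c) • Dd e d (p - 1) (t + d) := by
  intro p
  induction p with
  | zero =>
      intro t
      rw [(Pp_zero_comm e t (xg j2 (-(d : ℤ)))).eq, Nat.cast_zero, zero_mul, zero_smul, add_zero]
  | succ p ih =>
      intro t
      simp only [Nat.add_sub_cancel]
      by_cases h : (p : ℤ) + 1 ≤ t
      · have hterm : ∀ ab : ℕ × ℕ,
            (xg e (-1 - (ab.1 : ℤ)) * Pp e p ((p : ℤ) + ab.2)) * xg j2 (-(d : ℤ))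
              = xg j2 (-(d : ℤ)) * (xg e (-1 - (ab.1 : ℤ)) * Pp e p ((p : ℤ) + ab.2))
                + c • (xg 2 (-((d : ℤ) + 1) - ab.1) * Pp e p ((p : ℤ) + ab.2))
                + ((p : ℂ) * c) •
                    (xg e (-1 - (ab.1 : ℤ)) * Dd e d (p - 1) ((p : ℤ) + ab.2 + d)) := by
          intro ab
          calc (xg e (-1 - (ab.1 : ℤ)) * Pp e p ((p : ℤ) + ab.2)) * xg j2 (-(d : ℤ))
              = xg e (-1 - (ab.1 : ℤ)) * (Pp e p ((p : ℤ) + ab.2) * xg j2 (-(d : ℤ))) :=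
                mul_assoc _ _ _
            _ = xg e (-1 - (ab.1 : ℤ)) * (xg j2 (-(d : ℤ)) * Pp e p ((p : ℤ) + ab.2)
                  + ((p : ℂ) * c) • Dd e d (p - 1) ((p : ℤ) + ab.2 + d)) := by
                rw [ih ((p : ℤ) + ab.2)]
            _ = (xg e (-1 - (ab.1 : ℤ)) * xg j2 (-(d : ℤ))) * Pp e p ((p : ℤ) + ab.2)
                  + ((p : ℂ) * c) •
                      (xg e (-1 - (ab.1 : ℤ)) * Dd e d (p - 1) ((p : ℤ) + ab.2 + d)) := by
                rw [mul_add, mul_smul_comm, ← mul_assoc]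
            _ = (xg j2 (-(d : ℤ)) * xg e (-1 - (ab.1 : ℤ))
                  + c • xg 2 (-((d : ℤ) + 1) - ab.1)) * Pp e p ((p : ℤ) + ab.2)
                  + ((p : ℂ) * c) •
                      (xg e (-1 - (ab.1 : ℤ)) * Dd e d (p - 1) ((p : ℤ) + ab.2 + d)) := by
                rw [hC (-1 - (ab.1 : ℤ)) (-(d : ℤ)),
                  show (-1 - (ab.1 : ℤ) + -(d : ℤ)) = (-((d : ℤ) + 1) - ab.1) by ring]
            _ = _ := by
                rw [add_mul, smul_mul_assoc, mul_assoc]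
        rw [Pp_succ e h, Finset.sum_mul]
        rw [Finset.sum_congr rfl fun ab _ => hterm ab]
        rw [Finset.sum_add_distrib, Finset.sum_add_distrib, ← Finset.mul_sum, ← Finset.smul_sum,
          ← Finset.smul_sum, ← Pp_succ e h]
        have hS2 : ∑ ab ∈ Finset.HasAntidiagonal.antidiagonal (t - ((p : ℤ) + 1)).toNat,
            xg 2 (-((d : ℤ) + 1) - ab.1) * Pp e p ((p : ℤ) + ab.2) = Dd e d p (t + d) := by
          rw [Dd, if_pos (by push_cast; omega),
            show (t + (d : ℤ) - p - ((d : ℤ) + 1)).toNat = (t - ((p : ℤ) + 1)).toNat by omega]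
        have hS3 : ((p : ℂ) * c) • ∑ ab ∈ Finset.HasAntidiagonal.antidiagonal (t - ((p : ℤ) + 1)).toNat,
            xg e (-1 - (ab.1 : ℤ)) * Dd e d (p - 1) ((p : ℤ) + ab.2 + d)
            = ((p : ℂ) * c) • Dd e d p (t + d) := by
          rcases Nat.eq_zero_or_pos p with rfl | hp
          · simp
          · obtain ⟨p', rfl⟩ : ∃ p', p = p' + 1 := ⟨p - 1, by omega⟩
            congr 1
            simp only [Nat.add_sub_cancel]
            rw [show (t - (((p' + 1 : ℕ) : ℤ) + 1)).toNat
                = ((t + (d : ℤ)) - ((p' : ℤ) + 1) - ((d : ℤ) + 1)).toNat from by push_cast; omega]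
            rw [← Dd_absorb e (p := p') (u := t + (d : ℤ)) (by push_cast; omega)]
            refine Finset.sum_congr rfl fun ab _ => ?_
            rw [show (((p' + 1 : ℕ) : ℤ) + (ab.2 : ℤ) + (d : ℤ))
                = ((p' : ℤ) + ((d : ℤ) + 1) + ab.2) from by push_cast; ring]
        rw [hS2, hS3]
        rw [add_assoc, ← add_smul]
        congr 2
        push_cast; ring
      · rw [Pp_eq_zero (show t < ((p + 1 : ℕ) : ℤ) by push_cast; omega), zero_mul, mul_zero,
          Dd_eq_zero (show t + (d : ℤ) < (p : ℤ) + ((d : ℤ) + 1) by push_cast; omega),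
          smul_zero, add_zero]

lemma main_claim (k : ℕ) (e j2 : Fin 3) (c : ℂ)
    (hC : ∀ a b : ℤ, xg e a * xg j2 b = xg j2 b * xg e a + c • xg 2 (a + b))
    (hjj : Commute (xg j2 0) (xg j2 (-1)))
    (hbase : ∀ t : ℤ, Pp e (k + 1) t ∈ IkL0 k ⊔ Submodule.span U {xg 2 (-1)}) :
    ∀ (m : ℕ) (t : ℤ),
      Pp e (k + 1) t * xg j2 (-1) ^ m ∈ IkL0 k ⊔ Submodule.span U {xg 2 (-1)} := by
  set M := IkL0 k ⊔ Submodule.span U {xg 2 (-1)} with hM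
  intro m
  induction m with
  | zero => intro t; simpa using hbase t
  | succ m ih =>
      intro t
      have K1 := Kcomm e j2 c hC 1 (k + 1) t
      have K0 := Kcomm e j2 c hC 0 (k + 1) (t + 1)
      simp only [Nat.cast_zero, Nat.cast_one, add_zero, neg_zero, Nat.add_sub_cancel] at K0 K1
      have SP := Dd_split e k (t + 1)
      rw [add_sub_cancel_right] at SP
      have hD1 : Dd e 1 k (t + 1) = Dd e 0 k (t + 1) - xg 2 (-1) * Pp e k t := by
        rw [SP]; exact (add_sub_cancel_left _ _).symm
      have hD0 : (((k + 1 : ℕ) : ℂ) * c) • Dd e 0 k (t + 1)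
          = Pp e (k + 1) (t + 1) * xg j2 0 - xg j2 0 * Pp e (k + 1) (t + 1) := by
        rw [K0, add_sub_cancel_left]
      have h1 : Pp e (k + 1) t * xg j2 (-1) ^ (m + 1)
          = (Pp e (k + 1) t * xg j2 (-1)) * xg j2 (-1) ^ m := by
        rw [pow_succ', ← mul_assoc]
      rw [h1, K1, add_mul]
      refine add_mem ?_ ?_
      · rw [mul_assoc]
        have := Submodule.smul_mem M (xg j2 (-1)) (ih t)
        simpa [smul_eq_mul, mul_assoc] using this
      · have hD : (((k + 1 : ℕ) : ℂ) * c) • Dd e 1 k (t + 1)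
            = (Pp e (k + 1) (t + 1) * xg j2 0 - xg j2 0 * Pp e (k + 1) (t + 1))
              - (((k + 1 : ℕ) : ℂ) * c) • (xg 2 (-1) * Pp e k t) := by
          rw [hD1, smul_sub, hD0]
        rw [hD, sub_mul, sub_mul, smul_mul_assoc]
        refine sub_mem (sub_mem ?_ ?_) ?_
        · have hc : xg j2 0 * xg j2 (-1) ^ m = xg j2 (-1) ^ m * xg j2 0 :=
            (hjj.pow_right m).eq
          rw [mul_assoc, hc, ← mul_assoc]
          have hz : xg j2 0 ∈ nplusIdeal :=
            Submodule.subset_span ⟨j2, 0, le_refl 0, rfl⟩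
          have hmem : (Pp e (k + 1) (t + 1) * xg j2 (-1) ^ m) * xg j2 0 ∈ nplusIdeal := by
            rw [← smul_eq_mul]
            exact Submodule.smul_mem _ _ hz
          exact Submodule.mem_sup_left (Submodule.mem_sup_right hmem)
        · rw [mul_assoc]
          have := Submodule.smul_mem M (xg j2 0) (ih (t + 1))
          simpa [smul_eq_mul, mul_assoc] using this
        · have h2 : (xg 2 (-1) * Pp e k t) * xg j2 (-1) ^ m
              = (Pp e k t * xg j2 (-1) ^ m) * xg 2 (-1) := by
            rw [mul_assoc, (xg2_central (-1) (Pp e k t * xg j2 (-1) ^ m)).eq]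
          rw [h2]
          have h3 : (Pp e k t * xg j2 (-1) ^ m) * xg 2 (-1)
              ∈ Submodule.span U {xg 2 (-1)} := by
            rw [← smul_eq_mul]
            exact Submodule.smul_mem _ _ (Submodule.mem_span_singleton_self _)
          have h4 : (Pp e k t * xg j2 (-1) ^ m) * xg 2 (-1) ∈ M :=
            Submodule.mem_sup_right h3
          rw [Algebra.smul_def, ← smul_eq_mul]
          exact Submodule.smul_mem _ _ h4

lemma hbase_all (k : ℕ) (ii : Fin 2) (t' : ℤ) :
    Pp ii.castSucc (k + 1) t' ∈ IkL0 k ⊔ Submodule.span U {xg 2 (-1)} := by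
  by_cases h : (k : ℤ) + 1 ≤ t'
  · rw [Pp_eq_Rtr h]
    exact Submodule.mem_sup_left
      (Submodule.mem_sup_left (Submodule.subset_span ⟨ii, t', h, rfl⟩))
  · rw [Pp_eq_zero (show t' < ((k + 1 : ℕ) : ℤ) by push_cast; omega)]
    exact zero_mem _

theorem statement1' (k : ℕ) (hk : 0 < k) (i j : Fin 2) (hij : i ≠ j)
    (t : ℤ) (ht : (k : ℤ) + 1 ≤ t) (m : ℕ) (hm : m ≤ k) :
    Rtr k i t * xg j.castSucc (-1) ^ m ∈
      IkL0 k ⊔ Submodule.span U {xg 2 (-1)} := by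
  rw [← Pp_eq_Rtr ht]
  fin_cases i <;> fin_cases j
  · exact absurd rfl hij
  · refine main_claim k _ _ 1 ?_ (xg_self_commute _ 0 (-1)) (hbase_all k 0) m t
    intro a b
    rw [one_smul]
    exact xg_cross01 a b
  · refine main_claim k _ _ (-1) ?_ (xg_self_commute _ 0 (-1)) (hbase_all k 1) m t
    intro a b
    exact xg_cross10 a b
  · exact absurd rfl hij

/-- for i ≠ j in {1,2}, t ≥ k+1 and 0 ≤ m ≤ k,
R^i_{−1,t}·x_{α_j}(−1)^m ∈ I_{kΛ₀} + U(𝔫̄)·x_{α₁+α₂}(−1). -/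
theorem statement1 (k : ℕ) (hk : 0 < k) (i j : Fin 2) (hij : i ≠ j)
    (t : ℤ) (ht : (k : ℤ) + 1 ≤ t) (m : ℕ) (hm : m ≤ k) :
    Rtr k i t * xg j.castSucc (-1) ^ m ∈
      IkL0 k ⊔ Submodule.span U {xg 2 (-1)} :=
  statement1' k hk i j hij t ht m hm

end PrincipalSubspaceSL3
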